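/- Let all parameters be positive reals with ε ∈ (0,1), L = log₂(1/ε), and suppose D := d·m₀·n₀² + 2κLω − 2L·m₀·n₀·ω > 0. Then for every γ with 0 < γ < γ̃ = 4κL·m₀·ω/D, the derivative of the network-only cost satisfies C_N′(γ) < 0. -/

import Mathlib

open Real Set Filter

theorem stmt2 (m₀ n₀ d κ ω θ ε L : ℝ)
    (hm : 1 < m₀) (hn : 0 < n₀) (hd : 0 < d) (hκ : 0 < κ) (hω : 0 < ω) (hθ : 0 < θ)
    (hε : 0 < ε) (hε1 : ε < 1) (hL : L = Real.logb 2 (1/ε))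
    (C_N : ℝ → ℝ)
    (hC : C_N = fun γ => 2*ω*θ*(m₀/γ - 1)*((1 + κ/(n₀*γ))*L) + θ*(m₀ - m₀/γ)*n₀*d)
    (hD : 0 < d*m₀*n₀^2 + 2*κ*L*ω - 2*L*m₀*n₀*ω) :
    ∀ γ : ℝ, 0 < γ → γ < 4*κ*L*m₀*ω / (d*m₀*n₀^2 + 2*κ*L*ω - 2*L*m₀*n₀*ω) → deriv C_N γ < 0 := by
  intro γ hγ hγlt
  have hL0 : 0 < L := by
    rw [hL]
    apply Real.logb_pos (by norm_num)
    rw [one_lt_div hε]; exact hε1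
  have hfun : C_N = fun x : ℝ =>
      (2*ω*θ) * ((m₀ * x⁻¹ - 1) * ((1 + (κ/n₀) * x⁻¹) * L)) + (m₀ - m₀*x⁻¹) * (θ*n₀*d) := by
    rw [hC]; funext x
    rcases eq_or_ne x 0 with h | h
    · simp [h]; ring
    · field_simp
  have h1 : HasDerivAt (fun x : ℝ => m₀ * x⁻¹ - 1) (m₀ * (-(γ^2)⁻¹)) γ :=
    ((hasDerivAt_inv hγ.ne').const_mul m₀).sub_const 1
  have h2 : HasDerivAt (fun x : ℝ => (1 + (κ/n₀) * x⁻¹) * L) ((κ/n₀) * (-(γ^2)⁻¹) * L) γ :=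
    (((hasDerivAt_inv hγ.ne').const_mul (κ/n₀)).const_add 1).mul_const L
  have h3 : HasDerivAt (fun x : ℝ => m₀ - m₀ * x⁻¹) (-(m₀ * (-(γ^2)⁻¹))) γ :=
    ((hasDerivAt_inv hγ.ne').const_mul m₀).const_sub m₀
  have H : HasDerivAt (fun x : ℝ =>
      (2*ω*θ) * ((m₀ * x⁻¹ - 1) * ((1 + (κ/n₀) * x⁻¹) * L)) + (m₀ - m₀*x⁻¹) * (θ*n₀*d))
      ((2*ω*θ) * (m₀ * (-(γ^2)⁻¹) * ((1 + (κ/n₀) * γ⁻¹) * L)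
        + (m₀ * γ⁻¹ - 1) * ((κ/n₀) * (-(γ^2)⁻¹) * L))
        + (-(m₀ * (-(γ^2)⁻¹))) * (θ*n₀*d)) γ :=
    ((h1.mul h2).const_mul (2*ω*θ)).add (h3.mul_const (θ*n₀*d))
  rw [hfun, H.deriv]
  have key : γ * (d*m₀*n₀^2 + 2*κ*L*ω - 2*L*m₀*n₀*ω) < 4*κ*L*m₀*ω :=
    (lt_div_iff₀ hD).mp hγlt
  have heq : (2*ω*θ) * (m₀ * (-(γ^2)⁻¹) * ((1 + (κ/n₀) * γ⁻¹) * L)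
        + (m₀ * γ⁻¹ - 1) * ((κ/n₀) * (-(γ^2)⁻¹) * L))
        + (-(m₀ * (-(γ^2)⁻¹))) * (θ*n₀*d)
      = θ / (n₀ * γ^3) * (γ * (d*m₀*n₀^2 + 2*κ*L*ω - 2*L*m₀*n₀*ω) - 4*κ*L*m₀*ω) := by
    field_simp
    ring
  rw [heq]
  exact mul_neg_of_pos_of_neg (by positivity) (by linarith)
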